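/- The function φ(s) = √π · Γ(s − 1/2) ζ(2s − 1) / ( Γ(s) ζ(2s) ) tends to −1 as s → 1/2 with s ≠ 1/2; that is, the limit of √π Γ(s−1/2) ζ(2s−1) / (Γ(s) ζ(2s)) along the punctured neighborhood filter at s = 1/2 equals −1. -/

import Mathlib

open Complex Filter

/-- The scattering determinant `φ(s) = √π Γ(s−1/2) ζ(2s−1) / (Γ(s) ζ(2s))` of the modular
group tends to `−1` as `s → 1/2`, `s ≠ 1/2`. -/
theorem modular_scattering_at_half :
    Filter.Tendsto
      (fun s : ℂ => (Real.sqrt Real.pi : ℂ) * Complex.Gamma (s - 1 / 2) *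
        riemannZeta (2 * s - 1) / (Complex.Gamma s * riemannZeta (2 * s)))
      (nhdsWithin (1 / 2 : ℂ) {(1 / 2 : ℂ)}ᶜ) (nhds (-1)) := by
  have hpi : (Real.sqrt Real.pi : ℂ) ≠ 0 := by
    simpa using Real.sqrt_ne_zero'.mpr Real.pi_pos
  -- the map s ↦ 2s sends the punctured nbhd of 1/2 to the punctured nbhd of 1
  have hmap : Tendsto (fun s : ℂ => 2 * s) (nhdsWithin (1/2 : ℂ) {(1/2 : ℂ)}ᶜ)
      (nhdsWithin (1 : ℂ) {(1 : ℂ)}ᶜ) := by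
    rw [tendsto_nhdsWithin_iff]
    constructor
    · have : Tendsto (fun s : ℂ => 2 * s) (nhds (1/2 : ℂ)) (nhds (2 * (1/2 : ℂ))) :=
        (continuous_const.mul continuous_id).tendsto _
      simpa using this.mono_left nhdsWithin_le_nhds
    · filter_upwards [self_mem_nhdsWithin] with s hs
      simp only [Set.mem_compl_iff, Set.mem_singleton_iff] at hs ⊢
      intro h
      apply hs
      linear_combination h / 2
  -- residue of ζ at 1, transported
  have hzeta : Tendsto (fun s : ℂ => (2 * s - 1) * riemannZeta (2 * s))
      (nhdsWithin (1/2 : ℂ) {(1/2 : ℂ)}ᶜ) (nhds 1) := by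
    have := riemannZeta_residue_one.comp hmap
    simpa [Function.comp_def] using this
  -- denominator D s := Γ(s) * ((2s-1) ζ(2s)) → √π
  have hGammaHalf : Tendsto (fun s : ℂ => Complex.Gamma s)
      (nhdsWithin (1/2 : ℂ) {(1/2 : ℂ)}ᶜ) (nhds ((Real.sqrt Real.pi : ℂ))) := by
    have hd : DifferentiableAt ℂ Complex.Gamma (1/2 : ℂ) := by
      apply Complex.differentiableAt_Gamma
      intro m h
      have h2' : (((1:ℝ)/2 : ℝ) : ℂ) = ((-(m:ℝ) : ℝ) : ℂ) := by push_cast; exact h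
      have h2 : ((1:ℝ)/2) = -(m:ℝ) := Complex.ofReal_inj.mp h2'
      have h3 : (0:ℝ) ≤ (m:ℝ) := Nat.cast_nonneg m
      linarith
    have hG12 : Complex.Gamma (1/2 : ℂ) = (Real.sqrt Real.pi : ℂ) := by
      rw [show ((1:ℂ)/2) = ((1/2 : ℝ) : ℂ) by norm_num, Complex.Gamma_ofReal,
        Real.Gamma_one_half_eq]
    have := hd.continuousAt.tendsto
    rw [hG12] at this
    exact this.mono_left nhdsWithin_le_nhds
  have hD : Tendsto (fun s : ℂ => Complex.Gamma s * ((2 * s - 1) * riemannZeta (2 * s)))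
      (nhdsWithin (1/2 : ℂ) {(1/2 : ℂ)}ᶜ) (nhds ((Real.sqrt Real.pi : ℂ) * 1)) :=
    hGammaHalf.mul hzeta
  -- numerator N s := √π * Γ(s+1/2) * (2 * ζ(2s-1)) → -√π
  have hGamma1 : Tendsto (fun s : ℂ => Complex.Gamma (s + 1/2))
      (nhdsWithin (1/2 : ℂ) {(1/2 : ℂ)}ᶜ) (nhds 1) := by
    have hd : DifferentiableAt ℂ Complex.Gamma (1 : ℂ) := by
      apply Complex.differentiableAt_Gamma
      intro m h
      have h2 : (1:ℝ) = -(m:ℝ) := by exact_mod_cast h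
      have h3 : (0:ℝ) ≤ (m:ℝ) := Nat.cast_nonneg m
      linarith
    have h1 : Tendsto (fun s : ℂ => s + 1/2) (nhds (1/2 : ℂ)) (nhds (1 : ℂ)) := by
      have : Tendsto (fun s : ℂ => s + 1/2) (nhds (1/2 : ℂ)) (nhds ((1:ℂ)/2 + 1/2)) :=
        (continuous_id.add continuous_const).tendsto _
      norm_num at this
      exact this
    have := hd.continuousAt.tendsto.comp h1
    rw [Complex.Gamma_one] at this
    exact this.mono_left nhdsWithin_le_nhds
  have hzeta0 : Tendsto (fun s : ℂ => riemannZeta (2 * s - 1))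
      (nhdsWithin (1/2 : ℂ) {(1/2 : ℂ)}ᶜ) (nhds (-1/2)) := by
    have hd : DifferentiableAt ℂ riemannZeta (0 : ℂ) := differentiableAt_riemannZeta (by norm_num)
    have h1 : Tendsto (fun s : ℂ => 2 * s - 1) (nhds (1/2 : ℂ)) (nhds (0 : ℂ)) := by
      have : Tendsto (fun s : ℂ => 2 * s - 1) (nhds (1/2 : ℂ)) (nhds (2 * (1/2:ℂ) - 1)) :=
        ((continuous_const.mul continuous_id).sub continuous_const).tendsto _
      norm_num at this
      exact this
    have := hd.continuousAt.tendsto.comp h1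
    rw [riemannZeta_zero] at this
    exact this.mono_left nhdsWithin_le_nhds
  have hN : Tendsto (fun s : ℂ =>
      (Real.sqrt Real.pi : ℂ) * Complex.Gamma (s + 1/2) * (2 * riemannZeta (2 * s - 1)))
      (nhdsWithin (1/2 : ℂ) {(1/2 : ℂ)}ᶜ)
      (nhds ((Real.sqrt Real.pi : ℂ) * 1 * (2 * (-1/2)))) :=
    (tendsto_const_nhds.mul hGamma1).mul (tendsto_const_nhds.mul hzeta0)
  have hlim := hN.div hD (by simpa using hpi)
  have heq : (fun s : ℂ => (Real.sqrt Real.pi : ℂ) * Complex.Gamma (s - 1/2) *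
        riemannZeta (2 * s - 1) / (Complex.Gamma s * riemannZeta (2 * s)))
      =ᶠ[nhdsWithin (1/2 : ℂ) {(1/2 : ℂ)}ᶜ]
      (fun s : ℂ =>
        ((Real.sqrt Real.pi : ℂ) * Complex.Gamma (s + 1/2) * (2 * riemannZeta (2 * s - 1))) /
        (Complex.Gamma s * ((2 * s - 1) * riemannZeta (2 * s)))) := by
    filter_upwards [self_mem_nhdsWithin] with s hs
    simp only [Set.mem_compl_iff, Set.mem_singleton_iff] at hs
    have hs2 : s - 1/2 ≠ 0 := sub_ne_zero.mpr hs
    have hG : Complex.Gamma (s + 1/2) = (s - 1/2) * Complex.Gamma (s - 1/2) := by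
      have := Complex.Gamma_add_one (s - 1/2) hs2
      rw [← this]; ring_nf
    rw [hG]
    have h21 : (2 : ℂ) * s - 1 = 2 * (s - 1/2) := by ring
    rw [h21]
    have key := mul_div_mul_left
      ((Real.sqrt Real.pi : ℂ) * Complex.Gamma (s - 1/2) * riemannZeta (2 * (s - 1/2)))
      (Complex.Gamma s * riemannZeta (2 * s))
      (show (2 : ℂ) * (s - 1/2) ≠ 0 from mul_ne_zero two_ne_zero hs2)
    rw [← key]
    congr 1
    · ring
    · ring
  have hconst : ((Real.sqrt Real.pi : ℂ) * 1 * (2 * (-1/2))) / ((Real.sqrt Real.pi : ℂ) * 1)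
      = -1 := by
    field_simp
  rw [← hconst]
  exact Filter.Tendsto.congr' heq.symm hlim
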